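/- With P defined by the Dawson's-chess recursion P(n) = 0 for n ≤ 0 and P(n) = mex{P(i−2) XOR P(n−1−i) : 1 ≤ i ≤ n} for n ≥ 1, the periodic part of P for n ≥ 52 is given explicitly: for n ≥ 52, P(n) depends only on n mod 34, with values (indexed by residues 0,1,...,33) equal to 8,1,1,2,0,3,1,1,0,3,3,2,2,4,4,5,5,9,3,3,0,1,1,3,0,2,1,1,0,4,5,3,7,4. -/

import Mathlib

/-- The minimum excluded value of a finite set of naturals. -/
noncomputable def mex (s : Finset ℕ) : ℕ := sInf {n : ℕ | n ∉ s}

namespace DawsonAux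

/-! ### A computable list-based mex -/

def mexFrom (l : List ℕ) : ℕ → ℕ → ℕ
  | c, 0 => c
  | c, fuel+1 => if c ∈ l then mexFrom l (c+1) fuel else c

def mexL (l : List ℕ) : ℕ := mexFrom l 0 (l.length + 1)

lemma mexFrom_mem (l : List ℕ) : ∀ fuel c k, c ≤ k → k < mexFrom l c fuel → k ∈ l := by
  intro fuel
  induction fuel with
  | zero => intro c k h1 h2; simp only [mexFrom] at h2; omega
  | succ f ih =>
    intro c k h1 h2
    simp only [mexFrom] at h2
    by_cases hc : c ∈ l
    · rw [if_pos hc] at h2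
      rcases eq_or_lt_of_le h1 with rfl | h
      · exact hc
      · exact ih (c+1) k h h2
    · rw [if_neg hc] at h2; omega

lemma mexFrom_of_mem (l : List ℕ) :
    ∀ fuel c, mexFrom l c fuel ∈ l → mexFrom l c fuel = c + fuel := by
  intro fuel
  induction fuel with
  | zero => intro c _; simp [mexFrom]
  | succ f ih =>
    intro c h
    simp only [mexFrom] at h ⊢
    by_cases hc : c ∈ l
    · rw [if_pos hc] at h ⊢
      rw [ih _ h]; omega
    · rw [if_neg hc] at h; exact absurd h hc

lemma mexL_not_mem (l : List ℕ) : mexL l ∉ l := by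
  intro h
  have h1 : mexL l = l.length + 1 := by
    have := mexFrom_of_mem l (l.length + 1) 0 h
    simpa [mexL] using this
  have h2 : Finset.range (l.length + 1) ⊆ l.toFinset := by
    intro k hk
    rw [Finset.mem_range] at hk
    rw [List.mem_toFinset]
    exact mexFrom_mem l (l.length + 1) 0 k (Nat.zero_le _) (by rw [← h1] at hk; exact hk)
  have h3 := Finset.card_le_card h2
  rw [Finset.card_range] at h3
  have h4 := List.toFinset_card_le l
  omega

lemma mexL_mem_of_lt (l : List ℕ) {k : ℕ} (h : k < mexL l) : k ∈ l :=
  mexFrom_mem l _ 0 k (Nat.zero_le _) h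

lemma mex_eq (s : Finset ℕ) (m : ℕ) (h1 : m ∉ s) (h2 : ∀ k < m, k ∈ s) : mex s = m := by
  have hne : {n : ℕ | n ∉ s}.Nonempty := ⟨m, h1⟩
  have hmem := Nat.sInf_mem hne
  have hle : mex s ≤ m := Nat.sInf_le h1
  rcases eq_or_lt_of_le hle with h | h
  · exact h
  · exact absurd (h2 _ h) hmem

lemma mex_eq_mexL (s : Finset ℕ) (l : List ℕ) (h : ∀ x, x ∈ s ↔ x ∈ l) : mex s = mexL l :=
  mex_eq s _ (fun hm => mexL_not_mem l ((h _).1 hm))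
    (fun k hk => (h k).2 (mexL_mem_of_lt l hk))

lemma mexL_congr {l l' : List ℕ} (h : ∀ x, x ∈ l ↔ x ∈ l') : mexL l = mexL l' := by
  have h1 : mex l.toFinset = mexL l := mex_eq_mexL _ _ (by simp)
  have h2 : mex l.toFinset = mexL l' := mex_eq_mexL _ _ (by simp [h])
  omega

/-! ### The computable Grundy sequence -/

def xsOf (l : List ℕ) : List ℕ :=
  List.zipWith (· ^^^ ·) (0 :: l.dropLast) (l.dropLast.reverse ++ [0])

def gl : ℕ → List ℕ
  | 0 => [0]
  | n+1 => gl n ++ [mexL (xsOf (gl n))]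

def g (n : ℕ) : ℕ := (gl n).getD n 0

lemma gl_length (n : ℕ) : (gl n).length = n + 1 := by
  induction n with
  | zero => rfl
  | succ n ih => simp [gl, ih]

lemma gl_getD {m n : ℕ} (h : m ≤ n) : (gl n).getD m 0 = g m := by
  induction n with
  | zero =>
    have : m = 0 := by omega
    subst this; rfl
  | succ n ih =>
    rcases Nat.lt_or_ge m (n+1) with h' | h'
    · show (gl n ++ [mexL (xsOf (gl n))]).getD m 0 = g m
      rw [List.getD_append _ _ _ _ (by rw [gl_length]; omega)]
      exact ih (by omega)
    · have : m = n + 1 := by omega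
      subst this; rfl

lemma gl_getElem {n k : ℕ} (h : k < (gl n).length) : (gl n)[k] = g k := by
  rw [← List.getD_eq_getElem (gl n) 0 h]
  exact gl_getD (by rw [gl_length] at h; omega)

lemma g_succ (n : ℕ) : g (n+1) = mexL (xsOf (gl n)) := by
  show (gl n ++ [mexL (xsOf (gl n))]).getD (n+1) 0 = _
  rw [List.getD_eq_getElem _ 0 (by simp [gl_length]),
    List.getElem_append_right (by rw [gl_length])]
  simp [gl_length]

lemma xsOf_length (n : ℕ) : (xsOf (gl n)).length = n + 1 := by
  simp [xsOf, List.length_zipWith, gl_length]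

lemma t_get? {n k : ℕ} (h : k < n) : (gl n).dropLast[k]? = some (g k) := by
  have ht : (gl n).dropLast.length = n := by simp [gl_length]
  rw [List.getElem?_eq_getElem (by omega), List.getElem_dropLast, gl_getElem]

lemma xs_get? (n j : ℕ) (h : j < n + 1) :
    (xsOf (gl n))[j]? = some (g (j-1) ^^^ g (n-1-j)) := by
  have ht : (gl n).dropLast.length = n := by simp [gl_length]
  have hA : (0 :: (gl n).dropLast)[j]? = some (g (j-1)) := by
    rcases j with _ | j
    · rw [List.getElem?_cons_zero]; rfl
    · rw [List.getElem?_cons_succ, t_get? (by omega)]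
      norm_num
  have hB : ((gl n).dropLast.reverse ++ [0])[j]? = some (g (n-1-j)) := by
    rcases Nat.lt_or_ge j n with h' | h'
    · rw [List.getElem?_append_left (by simp only [List.length_reverse, ht]; exact h'),
        List.getElem?_reverse (by simp only [List.length_reverse, ht]; exact h'), ht,
        t_get? (by omega)]
    · rw [List.getElem?_append_right (by simp only [List.length_reverse, ht]; exact h')]
      have e : j - (gl n).dropLast.reverse.length = 0 := by
        simp only [List.length_reverse, ht]; omega
      have e2 : n - 1 - j = 0 := by omega
      rw [e, e2, List.getElem?_cons_zero]
      rfl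
  unfold xsOf
  rw [List.getElem?_zipWith, hA, hB]

lemma mem_xs (n x : ℕ) :
    x ∈ xsOf (gl n) ↔ ∃ j, j ≤ n ∧ x = g (j-1) ^^^ g (n-1-j) := by
  rw [List.mem_iff_getElem?]
  constructor
  · rintro ⟨j, hj⟩
    have hlen : j < n + 1 := by
      by_contra hc
      rw [List.getElem?_eq_none (by rw [xsOf_length]; omega)] at hj
      exact nomatch hj
    rw [xs_get? n j hlen] at hj
    exact ⟨j, by omega, (Option.some_inj.mp hj).symm⟩
  · rintro ⟨j, hj, rfl⟩
    exact ⟨j, xs_get? n j (by omega)⟩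


lemma P_eq_g (P : ℤ → ℕ)
    (h0 : ∀ n : ℤ, n ≤ 0 → P n = 0)
    (hrec : ∀ n : ℤ, 1 ≤ n →
      P n = mex ((Finset.Icc 1 n).image fun i => P (i - 2) ^^^ P (n - 1 - i))) :
    ∀ n : ℕ, P n = g n := by
  intro n
  induction n using Nat.strong_induction_on with
  | _ n ih =>
    match n, ih with
    | 0, _ => rw [show ((0:ℕ):ℤ) = 0 by norm_num, h0 0 le_rfl]; rfl
    | (n+1), ih =>
      have hP : ∀ z : ℤ, -1 ≤ z → z < ((n+1 : ℕ) : ℤ) → P z = g z.toNat := by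
        intro z hz1 hz2
        rcases lt_or_ge z 0 with hz | hz
        · rw [h0 z (by omega)]
          have : z.toNat = 0 := by omega
          rw [this]; rfl
        · have hzz : z = ((z.toNat : ℕ) : ℤ) := by omega
          rw [hzz]
          exact ih z.toNat (by omega)
      rw [hrec ((n+1 : ℕ) : ℤ) (by push_cast; omega), g_succ]
      apply mex_eq_mexL
      intro x
      rw [Finset.mem_image, mem_xs]
      constructor
      · rintro ⟨i, hi, rfl⟩
        rw [Finset.mem_Icc] at hi
        obtain ⟨hi1, hi2⟩ := hi
        have hi2' : i ≤ (n : ℤ) + 1 := by push_cast at hi2; omega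
        refine ⟨(i - 1).toNat, by omega, ?_⟩
        have e1 : P (i - 2) = g ((i-1).toNat - 1) := by
          rw [hP (i-2) (by omega) (by push_cast; omega)]
          congr 1
          omega
        have e2 : P (((n+1 : ℕ) : ℤ) - 1 - i) = g (n - 1 - ((i-1).toNat)) := by
          rw [hP _ (by push_cast; omega) (by push_cast; omega)]
          congr 1
          push_cast
          omega
        rw [e1, e2]
      · rintro ⟨j, hj, rfl⟩
        refine ⟨(j : ℤ) + 1, by rw [Finset.mem_Icc]; push_cast; omega, ?_⟩
        have e1 : P ((j:ℤ) + 1 - 2) = g (j - 1) := by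
          rw [hP _ (by omega) (by push_cast; omega)]
          congr 1
          omega
        have e2 : P (((n+1 : ℕ) : ℤ) - 1 - ((j:ℤ)+1)) = g (n - 1 - j) := by
          rw [hP _ (by push_cast; omega) (by push_cast; omega)]
          congr 1
          push_cast
          omega
        rw [e1, e2]

def glTbl : List ℕ := [0, 1, 1, 2, 0, 3, 1, 1, 0, 3, 3, 2, 2, 4, 0, 5, 2, 2, 3, 3, 0, 1, 1, 3, 0, 2, 1, 1, 0, 4, 5, 2, 7, 4, 0, 1, 1, 2, 0, 3, 1, 1, 0, 3, 3, 2, 2, 4, 4, 5, 5, 2, 3, 3, 0, 1, 1, 3, 0, 2, 1, 1, 0, 4, 5, 3, 7, 4, 8, 1, 1, 2, 0, 3, 1, 1, 0, 3, 3, 2, 2, 4, 4, 5, 5, 9, 3, 3, 0, 1, 1, 3, 0, 2, 1, 1, 0, 4, 5, 3, 7, 4, 8, 1, 1, 2, 0, 3, 1, 1, 0, 3, 3, 2, 2, 4, 4, 5, 5, 9, 3, 3, 0, 1, 1, 3, 0, 2, 1, 1, 0, 4, 5, 3, 7, 4, 8, 1, 1, 2, 0, 3, 1, 1, 0, 3,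 3, 2, 2, 4, 4, 5, 5, 9, 3, 3, 0, 1, 1, 3, 0, 2, 1, 1, 0, 4, 5, 3, 7, 4, 8, 1, 1, 2]

set_option maxRecDepth 100000 in
set_option maxHeartbeats 4000000 in
lemma gl173 : gl 173 = glTbl := by decide

lemma g_base {n : ℕ} (h : n < 174) : g n = glTbl.getD n 0 := by
  rw [← gl173]
  exact (gl_getD (by omega)).symm

set_option maxRecDepth 100000 in
lemma base_check : ∀ n < 174, 52 ≤ n →
    glTbl.getD n 0 = [8, 1, 1, 2, 0, 3, 1, 1, 0, 3, 3, 2, 2, 4, 4, 5, 5, 9, 3, 3, 0, 1,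
             1, 3, 0, 2, 1, 1, 0, 4, 5, 3, 7, 4].getD (n % 34) 0 := by decide

theorem g_tbl : ∀ n : ℕ, 52 ≤ n →
    g n = [8, 1, 1, 2, 0, 3, 1, 1, 0, 3, 3, 2, 2, 4, 4, 5, 5, 9, 3, 3, 0, 1,
             1, 3, 0, 2, 1, 1, 0, 4, 5, 3, 7, 4].getD (n % 34) 0 := by
  intro n
  induction n using Nat.strong_induction_on with
  | _ n ih =>
    intro h52
    rcases Nat.lt_or_ge n 174 with h | h
    · rw [g_base h]
      exact base_check n h h52
    · have key : ∀ k, 52 ≤ k → k + 34 < n → g (k + 34) = g k := by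
        intro k hk1 hk2
        rw [ih (k+34) (by omega) (by omega), ih k (by omega) (by omega)]
        congr 1
        omega
      have step : g n = g (n - 34) := by
        have e1 := g_succ (n-1)
        have e2 := g_succ (n-35)
        have hn1 : (n-1) + 1 = n := by omega
        have hn2 : (n-35) + 1 = n - 34 := by omega
        rw [hn1] at e1
        rw [hn2] at e2
        rw [e1, e2]
        apply mexL_congr
        intro x
        rw [mem_xs, mem_xs]
        constructor
        · rintro ⟨j, hj, rfl⟩
          by_cases hc : j + 87 ≤ n - 1
          · refine ⟨j, by omega, ?_⟩
            have e : (n-1) - 1 - j = ((n-35) - 1 - j) + 34 := by omega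
            rw [e, key ((n-35)-1-j) (by omega) (by omega)]
          · refine ⟨j - 34, by omega, ?_⟩
            have e1' : j - 1 = (j - 35) + 34 := by omega
            have e2' : (j - 34) - 1 = j - 35 := by omega
            have e3' : (n - 35) - 1 - (j - 34) = (n-1) - 1 - j := by omega
            rw [e1', key (j-35) (by omega) (by omega), e2', e3']
        · rintro ⟨j, hj, rfl⟩
          by_cases hc : j + 87 ≤ n - 1
          · refine ⟨j, by omega, ?_⟩
            have e : (n-1) - 1 - j = ((n-35) - 1 - j) + 34 := by omega
            rw [e, key ((n-35)-1-j) (by omega) (by omega)]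
          · refine ⟨j + 34, by omega, ?_⟩
            have e1' : (j + 34) - 1 = (j - 1) + 34 := by omega
            have e2' : (n-1) - 1 - (j + 34) = (n - 35) - 1 - j := by omega
            rw [e1', key (j-1) (by omega) (by omega), e2']
      rw [step, ih (n-34) (by omega) (by omega)]
      congr 1
      omega

end DawsonAux

/-- The explicit periodic part of Dawson's chess: with `P` defined by `P n = 0`
for `n ≤ 0` and `P n = mex{ P(i-2) ^^^ P(n-1-i) : 1 ≤ i ≤ n }` for `n ≥ 1`, the
value `P n` for `n ≥ 52` depends only on `n mod 34`, with values (indexed by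
residues 0, …, 33) equal to
8,1,1,2,0,3,1,1,0,3,3,2,2,4,4,5,5,9,3,3,0,1,1,3,0,2,1,1,0,4,5,3,7,4. -/
theorem dawson_periodic_part (P : ℤ → ℕ)
    (h0 : ∀ n : ℤ, n ≤ 0 → P n = 0)
    (hrec : ∀ n : ℤ, 1 ≤ n →
      P n = mex ((Finset.Icc 1 n).image fun i => P (i - 2) ^^^ P (n - 1 - i))) :
    ∀ n : ℤ, 52 ≤ n →
      P n = [8, 1, 1, 2, 0, 3, 1, 1, 0, 3, 3, 2, 2, 4, 4, 5, 5, 9, 3, 3, 0, 1,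
             1, 3, 0, 2, 1, 1, 0, 4, 5, 3, 7, 4].getD (n % 34).toNat 0 := by

  intro n hn
  have h1 : P n = DawsonAux.g n.toNat := by
    rw [show n = ((n.toNat : ℕ) : ℤ) by omega]
    exact DawsonAux.P_eq_g P h0 hrec n.toNat
  rw [h1, DawsonAux.g_tbl n.toNat (by omega)]
  congr 1
  omega
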